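/- Let N be an even lattice and let L ⊆ N be a sublattice on which the form of N restricts to a nondegenerate form (the inclusion need not be primitive and need not have torsion-free quotient). For g ∈ O(L)*, let ĝ : N ⊗ ℚ → N ⊗ ℚ be the ℚ-linear isometry equal to g ⊗ ℚ on L ⊗ ℚ and equal to the identity on the orthogonal complement of L ⊗ ℚ in N ⊗ ℚ. Then ĝ(N) = N and the restriction ĝ|_N lies in O(N)*; moreover the assignment g ↦ ĝ|_N is an injective group homomorphism O(L)* → O(N)*. (Proposition 2.3: any inclusion of lattices L ↪ N induces a natural injection O(L)* ↪ O(N)* by extension by 1.) -/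

import Mathlib

/-- `v` pairs integrally with every element of the lattice `L`. Together with the
condition `v ∈ spanℚ L`, this says that `v` belongs to the dual lattice `L^∨`. -/
def InDual {V : Type*} [AddCommGroup V] [Module ℚ V]
    (B : LinearMap.BilinForm ℚ V) (L : Submodule ℤ V) (v : V) : Prop :=
  ∀ y ∈ L, ∃ n : ℤ, B v y = (n : ℚ)

/-- `g` is the extension by `1` of a stable isometry of `L`: it is an isometry of the
ambient rational quadratic space, it preserves `L`, it acts trivially on the discriminant
group of `L`, and it is the identity on the orthogonal complement of `L ⊗ ℚ`. -/
def IsExtensionByOneOfStable {V : Type*} [AddCommGroup V] [Module ℚ V]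
    (B : LinearMap.BilinForm ℚ V) (L : Submodule ℤ V) (g : V ≃ₗ[ℚ] V) : Prop :=
  (∀ x y : V, B (g x) (g y) = B x y) ∧
  (∀ x : V, x ∈ L ↔ g x ∈ L) ∧
  (∀ v : V, v ∈ Submodule.span ℚ (L : Set V) → InDual B L v → g v - v ∈ L) ∧
  (∀ v : V, (∀ y ∈ L, B v y = 0) → g v = v)

/-- Clearing denominators: an element of the `ℚ`-span of a `ℤ`-submodule has a nonzero
integer multiple inside the submodule. -/
lemma clear_denom {V : Type*} [AddCommGroup V] [Module ℚ V]
    (L : Submodule ℤ V) (w : V) (hw : w ∈ Submodule.span ℚ (L : Set V)) :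
    ∃ n : ℤ, n ≠ 0 ∧ (n : ℚ) • w ∈ L := by
  induction hw using Submodule.span_induction with
  | mem x hx => exact ⟨1, one_ne_zero, by simpa using hx⟩
  | zero => exact ⟨1, one_ne_zero, by simp⟩
  | add x y _ _ hx hy =>
      obtain ⟨n, hn, hnx⟩ := hx
      obtain ⟨m, hm, hmy⟩ := hy
      refine ⟨n * m, mul_ne_zero hn hm, ?_⟩
      have : ((n * m : ℤ) : ℚ) • (x + y) = (m : ℤ) • ((n : ℚ) • x) + (n : ℤ) • ((m : ℚ) • y) := by
        push_cast
        rw [← Int.cast_smul_eq_zsmul ℚ, ← Int.cast_smul_eq_zsmul ℚ]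
        push_cast
        rw [smul_add, smul_smul, smul_smul]
        ring_nf
      rw [this]
      exact L.add_mem (L.smul_mem _ hnx) (L.smul_mem _ hmy)
  | smul q x _ hx =>
      obtain ⟨n, hn, hnx⟩ := hx
      refine ⟨q.den * n, mul_ne_zero (by exact_mod_cast q.den_nz) hn, ?_⟩
      have : ((q.den * n : ℤ) : ℚ) • (q • x) = (q.num : ℤ) • ((n : ℚ) • x) := by
        rw [← Int.cast_smul_eq_zsmul ℚ, smul_smul, smul_smul]
        congr 1
        push_cast
        rw [mul_comm ((q.den : ℚ)) (n : ℚ), mul_assoc, Rat.den_mul_eq_num]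
        ring
      rw [this]
      exact L.smul_mem _ hnx


/-- Let `N` be an even lattice (here a full lattice in the rational
quadratic space `(V, B)`) and `L ⊆ N` a sublattice on which the form is nondegenerate
(not necessarily primitive).  For `g ∈ O(L)*`, the extension `ĝ` of `g` by the identity on
the orthogonal complement of `L ⊗ ℚ` in `N ⊗ ℚ` satisfies `ĝ (N) = N` and `ĝ|_N ∈ O(N)*`;
moreover the assignment `g ↦ ĝ|_N` is an injective group homomorphism `O(L)* → O(N)*`. -/
theorem extension_by_one_injects_stable_groups
    {V : Type*} [AddCommGroup V] [Module ℚ V]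
    (B : LinearMap.BilinForm ℚ V)
    (hBsymm : ∀ x y : V, B x y = B y x) (hBnd : B.Nondegenerate)
    (N L : Submodule ℤ V)
    -- `N` is an even lattice:
    (hNfg : N.FG) (hNspan : Submodule.span ℚ (N : Set V) = ⊤)
    (hNint : ∀ x ∈ N, ∀ y ∈ N, ∃ n : ℤ, B x y = (n : ℚ))
    (hNeven : ∀ x ∈ N, ∃ n : ℤ, B x x = 2 * (n : ℚ))
    -- `L` is a sublattice on which the form is nondegenerate:
    (hLN : L ≤ N)
    (hLnd : ∀ x ∈ L, (∀ y ∈ L, B x y = 0) → x = 0) :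
    -- the extension by one of any stable isometry of `L` preserves `N` and is stable on `N`:
    (∀ g : V ≃ₗ[ℚ] V, IsExtensionByOneOfStable B L g →
      (∀ x : V, x ∈ N ↔ g x ∈ N) ∧
      (∀ v : V, v ∈ Submodule.span ℚ (N : Set V) → InDual B N v → g v - v ∈ N)) ∧
    -- the assignment is a group homomorphism:
    (∀ g₁ g₂ : V ≃ₗ[ℚ] V, IsExtensionByOneOfStable B L g₁ → IsExtensionByOneOfStable B L g₂ →
      IsExtensionByOneOfStable B L (g₁ * g₂)) ∧
    -- and it is injective: two extensions agreeing on `N` coincide: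
    (∀ g₁ g₂ : V ≃ₗ[ℚ] V, IsExtensionByOneOfStable B L g₁ → IsExtensionByOneOfStable B L g₂ →
      (∀ x ∈ N, g₁ x = g₂ x) → g₁ = g₂) := by
  -- V is finite dimensional
  have hfin : FiniteDimensional ℚ V := by
    obtain ⟨s, hs⟩ := hNfg
    refine Module.finite_def.mpr ⟨s, ?_⟩
    rw [← hNspan, ← hs, Submodule.span_span_of_tower]
  set W : Submodule ℚ V := Submodule.span ℚ (L : Set V) with hW
  have hrefl : B.IsRefl := fun x y h => by rw [hBsymm]; exact h
  -- the restriction of B to W is nondegenerate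
  have hWnd : (B.restrict W).Nondegenerate := by
    refine (LinearMap.IsRefl.nondegenerate_iff_separatingLeft ?_).mpr ?_
    · intro x y h
      simp only [LinearMap.BilinForm.restrict_apply, LinearMap.domRestrict_apply] at h ⊢
      rw [hBsymm]; exact h
    rintro ⟨w, hw⟩ h
    obtain ⟨n, hn, hnw⟩ := clear_denom L w hw
    have hzero : ∀ y ∈ L, B ((n : ℚ) • w) y = 0 := by
      intro y hy
      have := h ⟨y, Submodule.subset_span hy⟩
      simp only [LinearMap.BilinForm.restrict_apply, LinearMap.domRestrict_apply] at this
      simp [this]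
    have : (n : ℚ) • w = 0 := hLnd _ hnw hzero
    have hw0 : w = 0 := by
      rcases smul_eq_zero.mp this with h | h
      · exact absurd (by exact_mod_cast h) hn
      · exact h
    exact Subtype.ext hw0
  have hcompl : IsCompl W (B.orthogonal W) :=
    (LinearMap.BilinForm.restrict_nondegenerate_iff_isCompl_orthogonal hrefl).mp hWnd
  -- decomposition of any vector
  have decomp : ∀ v : V, ∃ a, a ∈ W ∧ ∃ b, (∀ y ∈ L, B b y = 0) ∧ v = a + b := by
    intro v
    have hv : v ∈ W ⊔ B.orthogonal W := by rw [hcompl.sup_eq_top]; trivial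
    obtain ⟨a, ha, b, hb, hab⟩ := Submodule.mem_sup.mp hv
    refine ⟨a, ha, b, fun y hy => hrefl _ _ (hb y (Submodule.subset_span hy)), hab.symm⟩
  -- key lemma: g v - v ∈ L for any v pairing integrally with L
  have key : ∀ g : V ≃ₗ[ℚ] V, IsExtensionByOneOfStable B L g →
      ∀ v : V, InDual B L v → g v - v ∈ L := by
    rintro g ⟨hiso, hmem, hstab, hid⟩ v hv
    obtain ⟨a, ha, b, hb, rfl⟩ := decomp v
    have hgb : g b = b := hid b hb
    have : g (a + b) - (a + b) = g a - a := by
      rw [map_add, hgb]; abel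
    rw [this]
    refine hstab a ha ?_
    intro y hy
    obtain ⟨n, hn⟩ := hv y hy
    refine ⟨n, ?_⟩
    have : B (a + b) y = B a y + B b y := by simp
    rw [this, hb y hy, add_zero] at hn
    exact hn
  -- inverses are also extensions by one of stable isometries
  have hinv : ∀ g : V ≃ₗ[ℚ] V, IsExtensionByOneOfStable B L g →
      IsExtensionByOneOfStable B L g⁻¹ := by
    rintro g hg
    obtain ⟨hiso, hmem, hstab, hid⟩ := hg
    have hginv : ∀ x : V, g⁻¹ x = g.symm x := fun x => rfl
    refine ⟨?_, ?_, ?_, ?_⟩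
    · intro x y
      rw [hginv, hginv, ← hiso (g.symm x) (g.symm y), g.apply_symm_apply, g.apply_symm_apply]
    · intro x
      rw [hginv]
      constructor
      · intro hx
        by_contra hc
        exact hc (((hmem (g.symm x)).mpr (by rwa [g.apply_symm_apply])))
      · intro hx
        have := (hmem (g.symm x)).mp hx
        rwa [g.apply_symm_apply] at this
    · have hsymmW : ∀ w ∈ W, g.symm w ∈ W := by
        intro w hw
        induction hw using Submodule.span_induction with
        | mem x hx =>
            exact Submodule.subset_span ((hmem (g.symm x)).mpr (by
              rwa [g.apply_symm_apply]))
        | zero => simp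
        | add x y _ _ hx hy => rw [map_add]; exact Submodule.add_mem W hx hy
        | smul q x _ hx => rw [map_smul]; exact Submodule.smul_mem W q hx
      intro v hvW hv
      rw [hginv]
      have hdual : InDual B L (g.symm v) := by
        intro y hy
        obtain ⟨n, hn⟩ := hv (g y) ((hmem y).mp hy)
        refine ⟨n, ?_⟩
        rw [← hiso (g.symm v) y, g.apply_symm_apply]
        exact hn
      have := hstab (g.symm v) (hsymmW v hvW) hdual
      rw [g.apply_symm_apply] at this
      have h2 : g.symm v - v = -(v - g.symm v) := by abel
      rw [h2]
      exact L.neg_mem this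
    · intro v hv
      have := hid v hv
      rw [hginv]
      rw [← this, g.symm_apply_apply, this]
  refine ⟨?_, ?_, ?_⟩
  · -- preservation of N and stability on N
    intro g hg
    constructor
    · intro x
      constructor
      · intro hx
        have hd : InDual B L x := fun y hy => hNint x hx y (hLN hy)
        have h1 : g x - x ∈ L := key g hg x hd
        have : g x = x + (g x - x) := by abel
        rw [this]
        exact N.add_mem hx (hLN h1)
      · intro hx
        have hd : InDual B L (g x) := fun y hy => hNint (g x) hx y (hLN hy)
        have h1 : g⁻¹ (g x) - g x ∈ L := key g⁻¹ (hinv g hg) (g x) hd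
        have h2 : g⁻¹ (g x) = x := g.symm_apply_apply x
        rw [h2] at h1
        have : x = g x + (x - g x) := by abel
        rw [this]
        exact N.add_mem hx (hLN h1)
    · intro v _ hv
      exact hLN (key g hg v (fun y hy => hv y (hLN hy)))
  · -- composition
    rintro g₁ g₂ ⟨hiso1, hmem1, hstab1, hid1⟩ ⟨hiso2, hmem2, hstab2, hid2⟩
    have happ : ∀ x : V, (g₁ * g₂) x = g₁ (g₂ x) := fun x => rfl
    refine ⟨?_, ?_, ?_, ?_⟩
    · intro x y
      rw [happ, happ, hiso1, hiso2]
    · intro x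
      exact (hmem2 x).trans (hmem1 (g₂ x))
    · intro v hvW hv
      have h2v : g₂ v - v ∈ L := hstab2 v hvW hv
      have hg2W : g₂ v ∈ Submodule.span ℚ (L : Set V) := by
        have : g₂ v = v + (g₂ v - v) := by abel
        rw [this]
        exact Submodule.add_mem _ hvW (Submodule.subset_span h2v)
      have hd2 : InDual B L (g₂ v) := by
        intro y hy
        have hyL : g₂.symm y ∈ L := (hmem2 (g₂.symm y)).mpr (by rwa [g₂.apply_symm_apply])
        obtain ⟨n, hn⟩ := hv (g₂.symm y) hyL
        refine ⟨n, ?_⟩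
        conv_lhs => rw [show y = g₂ (g₂.symm y) from (g₂.apply_symm_apply y).symm]
        rw [hiso2]
        exact hn
      have h1v : g₁ (g₂ v) - g₂ v ∈ L := hstab1 (g₂ v) hg2W hd2
      rw [happ]
      have : g₁ (g₂ v) - v = (g₁ (g₂ v) - g₂ v) + (g₂ v - v) := by abel
      rw [this]
      exact L.add_mem h1v h2v
    · intro v hv
      rw [happ, hid2 v hv, hid1 v hv]
  · -- injectivity
    intro g₁ g₂ _ _ hagree
    refine LinearEquiv.toLinearMap_injective (LinearMap.ext fun x => ?_)
    have hx : x ∈ Submodule.span ℚ (N : Set V) := by rw [hNspan]; trivial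
    simp only [LinearEquiv.coe_coe]
    induction hx using Submodule.span_induction with
    | mem y hy => exact hagree y hy
    | zero => simp
    | add a b _ _ ha hb => rw [map_add, map_add, ha, hb]
    | smul q a _ ha => rw [map_smul, map_smul, ha]
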